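/- arXiv:2209.14434 — 2 statements merged into one kernel-verified Lean document; each statement's English description precedes it below -/
import Mathlib

section
/- Let (Ω, F, P) be a standard Borel probability space, let X₁ : Ω → ℝ^d be integrable, let X₂ : Ω → S be measurable, and let Y : Ω → Fin k be measurable with P(Y = y) > 0 for every y. If X₁ and X₂ are conditionally independent given σ(Y), then almost surely E[X₁ | σ(X₂)] = Σ_{y ∈ Fin k} E[1_{Y = y} | σ(X₂)] · μ_y, where μ_y := E[X₁ · 1_{Y = y}] / P(Y = y) is the class-conditional mean. That is, the optimal reconstruction-based representation of X₂ is a fixed linear function (with coefficient vectors μ_y) of the posterior class probabilities E[1_{Y = y} | σ(X₂)]. -/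
open MeasureTheory ProbabilityTheory

lemma aux_null {Ω : Type*} {m : MeasurableSpace Ω} [F : MeasurableSpace Ω] [StandardBorelSpace Ω]
    {μ : Measure Ω} [IsProbabilityMeasure μ] (hm : m ≤ F)
    {N : Set Ω} (hN : μ N = 0) :
    ∀ᵐ ω ∂μ, condExpKernel μ m ω N = 0 := by
  set N' := toMeasurable μ N with hN'
  have hmN' : MeasurableSet N' := measurableSet_toMeasurable μ N
  have hμN' : μ N' = 0 := by rw [measure_toMeasurable]; exact hN
  have h1 : (fun ω => (condExpKernel μ m ω N').toReal) =ᵐ[μ] μ⟦N' | m⟧ :=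
    condExpKernel_ae_eq_condExp hm hmN'
  have h2 : μ⟦N' | m⟧ =ᵐ[μ] 0 := by
    have he : (N'.indicator (fun _ => (1:ℝ))) =ᵐ[μ] 0 := by
      have : ∀ᵐ ω ∂μ, ω ∉ N' := by
        rw [ae_iff]; simpa using hμN'
      filter_upwards [this] with ω hω
      simp [Set.indicator_of_notMem hω]
    calc μ⟦N' | m⟧ =ᵐ[μ] μ[(0 : Ω → ℝ) | m] := condExp_congr_ae he
    _ = 0 := condExp_zero
  filter_upwards [h1, h2] with ω e1 e2
  have h0 : (condExpKernel μ m ω N').toReal = 0 := by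
    rw [e1]; simpa using e2
  have hfin : condExpKernel μ m ω N' ≠ ⊤ := measure_ne_top _ _
  have hz : condExpKernel μ m ω N' = 0 := by
    rwa [ENNReal.toReal_eq_zero_iff, or_iff_left hfin] at h0
  exact le_antisymm (hz ▸ measure_mono (subset_toMeasurable μ N)) (zero_le)

lemma aux_atom {Ω β E : Type*} [MeasurableSpace E] [MeasurableSingletonClass E]
    {mβ : MeasurableSpace β} (Y : Ω → β)
    {f : Ω → E} (hf : Measurable[MeasurableSpace.comap Y mβ] f)
    {ω ω' : Ω} (h : Y ω = Y ω') : f ω = f ω' := by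
  obtain ⟨u, -, hu⟩ := hf (measurableSet_singleton (f ω))
  have hω : ω ∈ f ⁻¹' {f ω} := rfl
  rw [← hu] at hω
  have hω' : ω' ∈ Y ⁻¹' u := by
    have : Y ω ∈ u := hω
    rwa [h] at this
  rw [hu] at hω'
  exact (Set.mem_singleton_iff.mp hω').symm

lemma aux_star {Ω : Type*} {F : MeasurableSpace Ω} [StandardBorelSpace Ω]
    {μ : Measure Ω} [IsProbabilityMeasure μ]
    {k : ℕ} {S : Type*} [MeasurableSpace S] {E : Type*} [MeasurableSpace E]
    (X₁ X : Ω → E) (hX : Measurable X) (hae : X₁ =ᵐ[μ] X)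
    (X₂ : Ω → S) (hX₂ : Measurable X₂)
    (Y : Ω → Fin k) (hY : Measurable Y)
    (hpos : ∀ y : Fin k, 0 < μ (Y ⁻¹' {y}))
    (hindep : CondIndepFun (MeasurableSpace.comap Y inferInstance) (hY.comap_le) X₁ X₂ μ)
    {A' : Set E} (hA' : MeasurableSet A')
    {s : Set Ω} (hs : MeasurableSet[MeasurableSpace.comap X₂ inferInstance] s)
    (y : Fin k) :
    μ (Y ⁻¹' {y}) * μ (X ⁻¹' A' ∩ (s ∩ Y ⁻¹' {y}))
      = μ (s ∩ Y ⁻¹' {y}) * μ (X ⁻¹' A' ∩ Y ⁻¹' {y}) := by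
  have hmY : MeasurableSpace.comap Y inferInstance ≤ F := hY.comap_le
  have hsF : MeasurableSet s := hX₂.comap_le s hs
  have ht1' : MeasurableSet (X ⁻¹' A') := hX hA'
  have hker := ae_of_ae_trim hmY (hindep (X₁ ⁻¹' A') s ⟨A', hA', rfl⟩ hs)
  have hNnull : μ {ω | ¬ X₁ ω = X ω} = 0 := ae_iff.mp hae
  have hκN := aux_null hmY hNnull
  have key : ∀ᵐ ω ∂μ, (μ⟦X ⁻¹' A' ∩ s | MeasurableSpace.comap Y inferInstance⟧) ω = (μ⟦X ⁻¹' A' | MeasurableSpace.comap Y inferInstance⟧) ω * (μ⟦s | MeasurableSpace.comap Y inferInstance⟧) ω := by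
    have hc1 := condExpKernel_ae_eq_condExp (μ := μ) hmY (ht1'.inter hsF)
    have hc2 := condExpKernel_ae_eq_condExp (μ := μ) hmY ht1'
    have hc3 := condExpKernel_ae_eq_condExp (μ := μ) hmY hsF
    filter_upwards [hker, hκN, hc1, hc2, hc3] with ω h h0 e1 e2 e3
    have ht1eq : X₁ ⁻¹' A' =ᵐ[condExpKernel μ (MeasurableSpace.comap Y inferInstance) ω] X ⁻¹' A' := by
      have hmem : {ω' | ¬ X₁ ω' = X ω'}ᶜ ∈ ae (condExpKernel μ (MeasurableSpace.comap Y inferInstance) ω) := by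
        rw [mem_ae_iff, compl_compl]; exact h0
      refine Filter.eventuallyEq_of_mem hmem (fun ω' hω' => ?_)
      simp only [Set.mem_compl_iff, Set.mem_setOf_eq, not_not] at hω'
      show (ω' ∈ X₁ ⁻¹' A') = (ω' ∈ X ⁻¹' A')
      simp only [Set.mem_preimage, hω']
    have h1 : condExpKernel μ (MeasurableSpace.comap Y inferInstance) ω (X₁ ⁻¹' A' ∩ s) = condExpKernel μ (MeasurableSpace.comap Y inferInstance) ω (X ⁻¹' A' ∩ s) :=
      measure_congr (ht1eq.inter (Filter.EventuallyEq.refl _ _))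
    have h2 : condExpKernel μ (MeasurableSpace.comap Y inferInstance) ω (X₁ ⁻¹' A') = condExpKernel μ (MeasurableSpace.comap Y inferInstance) ω (X ⁻¹' A') :=
      measure_congr ht1eq
    rw [← e1, ← e2, ← e3, measureReal_def, measureReal_def, measureReal_def, ← h1, ← h2, h, ENNReal.toReal_mul]
  set Ay := Y ⁻¹' {y} with hAydef
  have hAyF : MeasurableSet Ay := hY (measurableSet_singleton y)
  have hAymY : MeasurableSet[MeasurableSpace.comap Y inferInstance] Ay := ⟨{y}, measurableSet_singleton y, rfl⟩
  obtain ⟨ω₀, hω₀⟩ := nonempty_of_measure_ne_zero (hpos y).ne'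
  set a := (μ⟦X ⁻¹' A' | MeasurableSpace.comap Y inferInstance⟧) ω₀ with hadef
  set b := (μ⟦s | MeasurableSpace.comap Y inferInstance⟧) ω₀ with hbdef
  have hYa : ∀ ω'' ∈ Ay, Y ω'' = Y ω₀ := by
    intro ω'' h''
    have h1 : Y ω'' = y := h''
    have h2 : Y ω₀ = y := hω₀
    rw [h1, h2]
  have hconstf : ∀ ω'' ∈ Ay, (μ⟦X ⁻¹' A' | MeasurableSpace.comap Y inferInstance⟧) ω'' = a :=
    fun ω'' h'' => aux_atom Y stronglyMeasurable_condExp.measurable (hYa ω'' h'')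
  have hconstg : ∀ ω'' ∈ Ay, (μ⟦s | MeasurableSpace.comap Y inferInstance⟧) ω'' = b :=
    fun ω'' h'' => aux_atom Y stronglyMeasurable_condExp.measurable (hYa ω'' h'')
  have int_ind : ∀ (t : Set Ω), MeasurableSet t →
      ∫ ω in Ay, Set.indicator t (fun _ => (1:ℝ)) ω ∂μ = (μ (t ∩ Ay)).toReal := by
    intro t ht
    rw [setIntegral_indicator ht, setIntegral_const, smul_eq_mul, mul_one, Set.inter_comm, measureReal_def]
  have hI1 : ∫ ω in Ay, (μ⟦X ⁻¹' A' ∩ s | MeasurableSpace.comap Y inferInstance⟧) ω ∂μ = (μ ((X ⁻¹' A' ∩ s) ∩ Ay)).toReal := by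
    rw [setIntegral_condExp hmY ((integrable_const (1:ℝ)).indicator (ht1'.inter hsF)) hAymY]
    exact int_ind _ (ht1'.inter hsF)
  have hIf : ∫ ω in Ay, (μ⟦X ⁻¹' A' | MeasurableSpace.comap Y inferInstance⟧) ω ∂μ = (μ (X ⁻¹' A' ∩ Ay)).toReal := by
    rw [setIntegral_condExp hmY ((integrable_const (1:ℝ)).indicator ht1') hAymY]
    exact int_ind _ ht1'
  have hIg : ∫ ω in Ay, (μ⟦s | MeasurableSpace.comap Y inferInstance⟧) ω ∂μ = (μ (s ∩ Ay)).toReal := by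
    rw [setIntegral_condExp hmY ((integrable_const (1:ℝ)).indicator hsF) hAymY]
    exact int_ind _ hsF
  have hIf' : ∫ ω in Ay, (μ⟦X ⁻¹' A' | MeasurableSpace.comap Y inferInstance⟧) ω ∂μ = (μ Ay).toReal * a := by
    rw [setIntegral_congr_fun hAyF hconstf, setIntegral_const, smul_eq_mul, measureReal_def]
  have hIg' : ∫ ω in Ay, (μ⟦s | MeasurableSpace.comap Y inferInstance⟧) ω ∂μ = (μ Ay).toReal * b := by
    rw [setIntegral_congr_fun hAyF hconstg, setIntegral_const, smul_eq_mul, measureReal_def]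
  have hI2 : ∫ ω in Ay, ((μ⟦X ⁻¹' A' | MeasurableSpace.comap Y inferInstance⟧) ω * (μ⟦s | MeasurableSpace.comap Y inferInstance⟧) ω) ∂μ = (μ Ay).toReal * (a * b) := by
    have : ∀ ω'' ∈ Ay, (μ⟦X ⁻¹' A' | MeasurableSpace.comap Y inferInstance⟧) ω'' * (μ⟦s | MeasurableSpace.comap Y inferInstance⟧) ω'' = a * b := by
      intro ω'' h''; rw [hconstf ω'' h'', hconstg ω'' h'']
    rw [setIntegral_congr_fun hAyF this, setIntegral_const, smul_eq_mul, measureReal_def]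
  have hmain : (μ ((X ⁻¹' A' ∩ s) ∩ Ay)).toReal = (μ Ay).toReal * (a * b) := by
    rw [← hI1, ← hI2]
    refine setIntegral_congr_ae hAyF ?_
    filter_upwards [key] with ω h _
    exact h
  have ha : (μ Ay).toReal * a = (μ (X ⁻¹' A' ∩ Ay)).toReal := by rw [← hIf', hIf]
  have hb : (μ Ay).toReal * b = (μ (s ∩ Ay)).toReal := by rw [← hIg', hIg]
  have hreal : (μ Ay).toReal * (μ (X ⁻¹' A' ∩ (s ∩ Ay))).toReal
      = (μ (s ∩ Ay)).toReal * (μ (X ⁻¹' A' ∩ Ay)).toReal := by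
    rw [← Set.inter_assoc, hmain, ← ha, ← hb]; ring
  refine (ENNReal.toReal_eq_toReal_iff' ?_ ?_).mp ?_
  · exact ENNReal.mul_ne_top (measure_ne_top _ _) (measure_ne_top _ _)
  · exact ENNReal.mul_ne_top (measure_ne_top _ _) (measure_ne_top _ _)
  · rw [ENNReal.toReal_mul, ENNReal.toReal_mul]; exact hreal

lemma aux_key {Ω : Type*} {F : MeasurableSpace Ω} [StandardBorelSpace Ω]
    {μ : Measure Ω} [IsProbabilityMeasure μ]
    {d k : ℕ} {S : Type*} [MeasurableSpace S]
    (X₁ : Ω → EuclideanSpace ℝ (Fin d)) (hX₁ : Integrable X₁ μ)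
    (X₂ : Ω → S) (hX₂ : Measurable X₂)
    (Y : Ω → Fin k) (hY : Measurable Y)
    (hpos : ∀ y : Fin k, 0 < μ (Y ⁻¹' {y}))
    (hindep : CondIndepFun (MeasurableSpace.comap Y inferInstance) (hY.comap_le) X₁ X₂ μ)
    {s : Set Ω} (hs : MeasurableSet[MeasurableSpace.comap X₂ inferInstance] s)
    (y : Fin k) :
    (μ (Y ⁻¹' {y})).toReal • ∫ ω in s ∩ Y ⁻¹' {y}, X₁ ω ∂μ
      = (μ (s ∩ Y ⁻¹' {y})).toReal • ∫ ω in Y ⁻¹' {y}, X₁ ω ∂μ := by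
  set X := hX₁.1.mk X₁ with hXdef
  have hX : Measurable X := hX₁.1.stronglyMeasurable_mk.measurable
  have hae : X₁ =ᵐ[μ] X := hX₁.1.ae_eq_mk
  have hXaem : AEMeasurable X₁ μ := hX₁.1.aemeasurable
  have hsF : MeasurableSet s := hX₂.comap_le s hs
  have hAyF : MeasurableSet (Y ⁻¹' {y}) := hY (measurableSet_singleton y)
  have hsAy : MeasurableSet (s ∩ Y ⁻¹' {y}) := hsF.inter hAyF
  -- equality of (scaled) pushforward measures
  have heq : μ (Y ⁻¹' {y}) • ((μ.restrict (s ∩ Y ⁻¹' {y})).map X₁)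
      = μ (s ∩ Y ⁻¹' {y}) • ((μ.restrict (Y ⁻¹' {y})).map X₁) := by
    refine Measure.ext fun A' hA' => ?_
    rw [Measure.smul_apply, Measure.smul_apply,
      Measure.map_apply_of_aemeasurable (hXaem.restrict) hA',
      Measure.map_apply_of_aemeasurable (hXaem.restrict) hA',
      Measure.restrict_apply' hsAy, Measure.restrict_apply' hAyF]
    have hpre : (X₁ ⁻¹' A' : Set Ω) =ᵐ[μ] X ⁻¹' A' := by
      filter_upwards [hae] with ω hω
      show (ω ∈ X₁ ⁻¹' A') = (ω ∈ X ⁻¹' A')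
      simp only [Set.mem_preimage, hω]
    have e1 : μ (X₁ ⁻¹' A' ∩ (s ∩ Y ⁻¹' {y})) = μ (X ⁻¹' A' ∩ (s ∩ Y ⁻¹' {y})) :=
      measure_congr (hpre.inter (Filter.EventuallyEq.refl _ _))
    have e2 : μ (X₁ ⁻¹' A' ∩ Y ⁻¹' {y}) = μ (X ⁻¹' A' ∩ Y ⁻¹' {y}) :=
      measure_congr (hpre.inter (Filter.EventuallyEq.refl _ _))
    rw [e1, e2, smul_eq_mul, smul_eq_mul]
    exact aux_star X₁ X hX hae X₂ hX₂ Y hY hpos hindep hA' hs y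
  -- pass to Bochner integrals of the identity
  have hid : ∀ (C : Set Ω), ∫ x, x ∂((μ.restrict C).map X₁) = ∫ ω in C, X₁ ω ∂μ := by
    intro C
    exact integral_map hXaem.restrict aestronglyMeasurable_id
  calc (μ (Y ⁻¹' {y})).toReal • ∫ ω in s ∩ Y ⁻¹' {y}, X₁ ω ∂μ
      = ∫ x, x ∂(μ (Y ⁻¹' {y}) • ((μ.restrict (s ∩ Y ⁻¹' {y})).map X₁)) := by
        rw [integral_smul_measure, hid]
    _ = ∫ x, x ∂(μ (s ∩ Y ⁻¹' {y}) • ((μ.restrict (Y ⁻¹' {y})).map X₁)) := by rw [heq]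
    _ = (μ (s ∩ Y ⁻¹' {y})).toReal • ∫ ω in Y ⁻¹' {y}, X₁ ω ∂μ := by
        rw [integral_smul_measure, hid]


/-- Structural core of Theorem 1: under conditional independence of the two views given
the label, the optimal reconstruction-based representation `E[X₁ | σ(X₂)]` is the fixed
linear combination `∑ y, E[1_{Y = y} | σ(X₂)] • μ_y` of the posterior class
probabilities, where `μ_y = E[X₁ · 1_{Y = y}] / P(Y = y)` is the class-conditional mean. -/
theorem condexp_eq_linear_in_posterior
    {Ω : Type*} {F : MeasurableSpace Ω} [StandardBorelSpace Ω]
    {μ : Measure Ω} [IsProbabilityMeasure μ]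
    {d k : ℕ} {S : Type*} [MeasurableSpace S]
    (X₁ : Ω → EuclideanSpace ℝ (Fin d)) (hX₁ : Integrable X₁ μ)
    (X₂ : Ω → S) (hX₂ : Measurable X₂)
    (Y : Ω → Fin k) (hY : Measurable Y)
    (hpos : ∀ y : Fin k, 0 < μ (Y ⁻¹' {y}))
    (hindep : CondIndepFun (MeasurableSpace.comap Y inferInstance)
      (hY.comap_le) X₁ X₂ μ) :
    μ[X₁ | MeasurableSpace.comap X₂ inferInstance]
      =ᵐ[μ] fun ω => ∑ y : Fin k,
        (condExp (MeasurableSpace.comap X₂ inferInstance) μ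
            (Set.indicator (Y ⁻¹' {y}) fun _ => (1 : ℝ)) ω) •
          (((μ (Y ⁻¹' {y})).toReal)⁻¹ • ∫ ω', Set.indicator (Y ⁻¹' {y}) X₁ ω' ∂μ) := by
  have hm₂ : MeasurableSpace.comap X₂ inferInstance ≤ F := hX₂.comap_le
  have hAyF : ∀ y : Fin k, MeasurableSet (Y ⁻¹' {y}) :=
    fun y => hY (measurableSet_singleton y)
  refine (ae_eq_condExp_of_forall_setIntegral_eq hm₂ hX₁ ?_ ?_ ?_).symm
  · -- integrability on sets
    intro s _ _
    refine Integrable.integrableOn (integrable_finset_sum _ fun y _ => ?_)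
    exact integrable_condExp.smul_const _
  · -- set integrals agree
    intro s hs _
    have hsF : MeasurableSet s := hm₂ s hs
    rw [integral_finset_sum _ (fun y _ => (integrable_condExp.smul_const _).integrableOn)]
    have hR : ∫ x in s, X₁ x ∂μ = ∑ y : Fin k, ∫ x in s ∩ Y ⁻¹' {y}, X₁ x ∂μ := by
      have h1 : ∀ x, X₁ x = ∑ y : Fin k, (Y ⁻¹' {y}).indicator X₁ x := by
        intro x
        symm
        rw [Finset.sum_eq_single (Y x)]
        · exact Set.indicator_of_mem (Set.mem_preimage.mpr rfl) X₁
        · intro b _ hb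
          refine Set.indicator_of_notMem ?_ X₁
          simp only [Set.mem_preimage, Set.mem_singleton_iff]
          exact fun h => hb (h ▸ rfl)
        · exact fun h => absurd (Finset.mem_univ _) h
      calc ∫ x in s, X₁ x ∂μ
          = ∫ x in s, (∑ y : Fin k, (Y ⁻¹' {y}).indicator X₁ x) ∂μ :=
            setIntegral_congr_fun hsF (fun x _ => h1 x)
        _ = ∑ y : Fin k, ∫ x in s, (Y ⁻¹' {y}).indicator X₁ x ∂μ :=
            integral_finset_sum _ (fun y _ => (hX₁.indicator (hAyF y)).integrableOn)
        _ = ∑ y : Fin k, ∫ x in s ∩ Y ⁻¹' {y}, X₁ x ∂μ :=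
            Finset.sum_congr rfl (fun y _ => setIntegral_indicator (hAyF y))
    rw [hR]
    refine Finset.sum_congr rfl (fun y _ => ?_)
    rw [integral_smul_const]
    have hcond : ∫ x in s, (μ⟦Y ⁻¹' {y} | MeasurableSpace.comap X₂ inferInstance⟧) x ∂μ
        = (μ (s ∩ Y ⁻¹' {y})).toReal := by
      rw [setIntegral_condExp hm₂ ((integrable_const (1:ℝ)).indicator (hAyF y)) hs,
        setIntegral_indicator (hAyF y), setIntegral_const, smul_eq_mul, mul_one, measureReal_def]
    rw [hcond, integral_indicator (hAyF y)]
    -- now use the key identity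
    have hkey := aux_key X₁ hX₁ X₂ hX₂ Y hY hpos hindep hs y
    have hT : (μ (Y ⁻¹' {y})).toReal ≠ 0 :=
      (ENNReal.toReal_pos (hpos y).ne' (measure_ne_top μ _)).ne'
    calc (μ (s ∩ Y ⁻¹' {y})).toReal •
          ((μ (Y ⁻¹' {y})).toReal⁻¹ • ∫ ω in Y ⁻¹' {y}, X₁ ω ∂μ)
        = (μ (Y ⁻¹' {y})).toReal⁻¹ •
          ((μ (s ∩ Y ⁻¹' {y})).toReal • ∫ ω in Y ⁻¹' {y}, X₁ ω ∂μ) := smul_comm _ _ _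
      _ = (μ (Y ⁻¹' {y})).toReal⁻¹ •
          ((μ (Y ⁻¹' {y})).toReal • ∫ ω in s ∩ Y ⁻¹' {y}, X₁ ω ∂μ) := by rw [hkey]
      _ = ∫ ω in s ∩ Y ⁻¹' {y}, X₁ ω ∂μ := by
          rw [smul_smul, inv_mul_cancel₀ hT, one_smul]
  · -- strong measurability
    refine StronglyMeasurable.aestronglyMeasurable ?_
    exact Finset.stronglyMeasurable_fun_sum _ (fun y _ =>
      stronglyMeasurable_condExp.smul_const _)
end

section
/- Let (Ω, F, P) be a standard Borel probability space, let X₂ : Ω → ℝ^m be square-integrable, let X₁ : Ω → S be measurable, and let Y : Ω → Fin k be measurable with P(Y = y) > 0 for every y. Assume (i) X₁ and X₂ are conditionally independent given σ(Y) (the class conditional independence assumption), and (ii) the class-conditional means μ_y := E[X₂ · 1_{Y = y}] / P(Y = y) ∈ ℝ^m, y ∈ Fin k, are linearly independent. Let ψ* denote the representation minimizing the reconstruction loss, i.e., ψ*(X₁) = E[X₂ | σ(X₁)] (which minimizes E[‖X₂ − ψ(X₁)‖²] over measurable ψ). Then there exists a linear map w : ℝ^m → ℝ^k such that almost surely w(E[X₂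 | σ(X₁)]) = (E[1_{Y = y} | σ(X₁)])_{y ∈ Fin k}; i.e., wᵀ ψ*(X₁) = E[Y | X₁] where Y is identified with its one-hot encoding in ℝ^k. -/
open MeasureTheory ProbabilityTheory

lemma comap_meas_const {Ω β γ : Type*} [MeasurableSpace γ] [MeasurableSingletonClass γ]
    [MeasurableSpace β] {Y : Ω → β} {f : Ω → γ}
    (hf : Measurable[MeasurableSpace.comap Y inferInstance] f)
    {ω ω' : Ω} (h : Y ω = Y ω') : f ω = f ω' := by
  obtain ⟨E, -, hE⟩ := hf (measurableSet_singleton (f ω))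
  have hω : ω ∈ Y ⁻¹' E := by rw [hE]; exact rfl
  have hω' : ω' ∈ Y ⁻¹' E := by simpa [Set.mem_preimage, ← h] using hω
  rw [hE] at hω'
  exact (hω'.symm : _)

lemma setIntegral_condexp_atom {Ω : Type*} {F : MeasurableSpace Ω}
    (μ : Measure Ω) [IsFiniteMeasure μ] {k : ℕ} {Y : Ω → Fin k} (hY : Measurable Y)
    {C : Set Ω} (hC : MeasurableSet C) (y : Fin k) :
    ∫ ω in Y ⁻¹' {y}, (μ⟦C | MeasurableSpace.comap Y inferInstance⟧) ω ∂μ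
      = (μ (C ∩ Y ⁻¹' {y})).toReal := by
  rw [setIntegral_condExp hY.comap_le
      ((integrable_const (1 : ℝ)).indicator hC) ⟨{y}, trivial, rfl⟩,
    setIntegral_indicator hC]
  simp [Set.inter_comm]
  rfl

lemma cond_factorization {Ω S : Type*} {F : MeasurableSpace Ω} [StandardBorelSpace Ω]
    {μ : Measure Ω} [IsProbabilityMeasure μ] {k m : ℕ} [MeasurableSpace S]
    {X₁ : Ω → S} (hX₁ : Measurable X₁)
    {X₂ X₂' : Ω → EuclideanSpace ℝ (Fin m)} (hX₂' : Measurable X₂') (heq : X₂ =ᵐ[μ] X₂')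
    {Y : Ω → Fin k} (hY : Measurable Y)
    (hindep : CondIndepFun (MeasurableSpace.comap Y inferInstance) (hY.comap_le) X₁ X₂ μ)
    {t : Set S} (ht : MeasurableSet t) {u : Set (EuclideanSpace ℝ (Fin m))}
    (hu : MeasurableSet u) (y : Fin k) (hposy : 0 < μ (Y ⁻¹' {y})) :
    μ (X₁ ⁻¹' t ∩ X₂' ⁻¹' u ∩ Y ⁻¹' {y}) * μ (Y ⁻¹' {y})
      = μ (X₁ ⁻¹' t ∩ Y ⁻¹' {y}) * μ (X₂' ⁻¹' u ∩ Y ⁻¹' {y}) := by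
  have hm : MeasurableSpace.comap Y (inferInstance : MeasurableSpace (Fin k)) ≤ F :=
    hY.comap_le
  set κ := condExpKernel (mΩ := F) μ (MeasurableSpace.comap Y inferInstance) with hκdef
  set A := X₁ ⁻¹' t with hA
  set B := X₂' ⁻¹' u with hB
  have hAmeas : MeasurableSet A := hX₁ ht
  have hBmeas : MeasurableSet B := hX₂' hu
  -- step 1 : kernel independence for the preimages
  have step1 : ∀ᵐ ω ∂μ, κ ω (A ∩ X₂ ⁻¹' u) = κ ω A * κ ω (X₂ ⁻¹' u) :=
    ae_of_ae_trim hm (hindep (A) (X₂ ⁻¹' u) ⟨t, ht, rfl⟩ ⟨u, hu, rfl⟩)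
  -- step 2 : the kernel gives measure zero to the bad set a.e.
  set bad := {ω | ¬ X₂ ω = X₂' ω} with hbad
  have hμbad : μ bad = 0 := by
    rw [← ae_iff] at *; exact heq
  set N := toMeasurable μ bad with hNdef
  have hμN : μ N = 0 := by rw [measure_toMeasurable]; exact hμbad
  have hNmeas : MeasurableSet N := measurableSet_toMeasurable μ bad
  have κN0 : ∀ᵐ ω ∂μ, κ ω N = 0 := by
    have h1 := condExpKernel_ae_eq_condExp (μ := μ) hm hNmeas
    have h2 : (μ⟦N | MeasurableSpace.comap Y inferInstance⟧) =ᵐ[μ] 0 := by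
      have h3 : (Set.indicator N (fun _ => (1:ℝ))) =ᵐ[μ] 0 := by
        have : ∀ᵐ ω ∂μ, ω ∉ N := by
          rw [ae_iff]; simpa using hμN
        filter_upwards [this] with ω hω
        simp [Set.indicator_of_notMem hω]
      calc (μ⟦N | MeasurableSpace.comap Y inferInstance⟧) =ᵐ[μ] μ[(0 : Ω → ℝ) | MeasurableSpace.comap Y inferInstance] := condExp_congr_ae h3
        _ = 0 := condExp_zero
    filter_upwards [h1, h2] with ω hω1 hω2
    have : (κ ω N).toReal = 0 := by show (condExpKernel μ (MeasurableSpace.comap Y inferInstance) ω).real N = 0; rw [hω1]; simpa using hω2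
    have hfin : κ ω N ≠ ⊤ := measure_ne_top _ _
    exact (ENNReal.toReal_eq_zero_iff _).mp this |>.resolve_right hfin
  -- step 3 : replace X₂ by X₂'
  have step3 : ∀ᵐ ω ∂μ, κ ω (A ∩ B) = κ ω A * κ ω B := by
    filter_upwards [step1, κN0] with ω h1 h0
    have hsub1 : (X₂ ⁻¹' u \ B) ⊆ N := fun x hx =>
      subset_toMeasurable μ bad (fun hxx => hx.2 (by simpa [hB, Set.mem_preimage, ← hxx] using hx.1))
    have hsub2 : (B \ X₂ ⁻¹' u) ⊆ N := fun x hx =>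
      subset_toMeasurable μ bad (fun hxx => hx.2 (by simpa [hB, Set.mem_preimage, hxx] using hx.1))
    have he : (X₂ ⁻¹' u : Set Ω) =ᵐ[κ ω] B := by
      rw [ae_eq_set]
      exact ⟨measure_mono_null hsub1 h0, measure_mono_null hsub2 h0⟩
    have he2 : (A ∩ X₂ ⁻¹' u : Set Ω) =ᵐ[κ ω] (A ∩ B : Set Ω) :=
      (Filter.EventuallyEq.refl _ _).inter he
    rw [← measure_congr he2, ← measure_congr he]
    exact h1
  -- step 4 : to conditional expectations
  have hA' := condExpKernel_ae_eq_condExp (μ := μ) hm hAmeas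
  have hB' := condExpKernel_ae_eq_condExp (μ := μ) hm hBmeas
  have hAB' := condExpKernel_ae_eq_condExp (μ := μ) hm (hAmeas.inter hBmeas)
  have hprod : ∀ᵐ ω ∂μ, (μ⟦A ∩ B | MeasurableSpace.comap Y inferInstance⟧) ω = (μ⟦A | MeasurableSpace.comap Y inferInstance⟧) ω * (μ⟦B | MeasurableSpace.comap Y inferInstance⟧) ω := by
    filter_upwards [step3, hA', hB', hAB'] with ω h h1 h2 h3
    rw [← h3, ← h1, ← h2]
    show (κ ω (A ∩ B)).toReal = _
    rw [h, ENNReal.toReal_mul]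
    rfl
  -- step 5 : integrate over the atom
  obtain ⟨ω₀, hω₀⟩ : (Y ⁻¹' {y}).Nonempty := nonempty_of_measure_ne_zero hposy.ne'
  have hYy : MeasurableSet (Y ⁻¹' {y}) := hY (measurableSet_singleton y)
  have hYω₀ : Y ω₀ = y := hω₀
  have hconst : ∀ (C : Set Ω), ∀ ω ∈ Y ⁻¹' {y}, (μ⟦C | MeasurableSpace.comap Y inferInstance⟧) ω = (μ⟦C | MeasurableSpace.comap Y inferInstance⟧) ω₀ := by
    intro C ω hω
    exact comap_meas_const (stronglyMeasurable_condExp.measurable) (by rw [hYω₀]; exact hω)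
  have EA : (μ⟦A | MeasurableSpace.comap Y inferInstance⟧) ω₀ * (μ (Y ⁻¹' {y})).toReal = (μ (A ∩ Y ⁻¹' {y})).toReal := by
    rw [← setIntegral_condexp_atom μ hY hAmeas y]
    rw [setIntegral_congr_fun hYy (fun ω hω => hconst A ω hω), setIntegral_const, smul_eq_mul,
      mul_comm]
    rfl
  have EB : (μ⟦B | MeasurableSpace.comap Y inferInstance⟧) ω₀ * (μ (Y ⁻¹' {y})).toReal = (μ (B ∩ Y ⁻¹' {y})).toReal := by
    rw [← setIntegral_condexp_atom μ hY hBmeas y]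
    rw [setIntegral_congr_fun hYy (fun ω hω => hconst B ω hω), setIntegral_const, smul_eq_mul,
      mul_comm]
    rfl
  have EAB : (μ⟦A | MeasurableSpace.comap Y inferInstance⟧) ω₀ * (μ⟦B | MeasurableSpace.comap Y inferInstance⟧) ω₀ * (μ (Y ⁻¹' {y})).toReal
      = (μ (A ∩ B ∩ Y ⁻¹' {y})).toReal := by
    rw [← setIntegral_condexp_atom μ hY (hAmeas.inter hBmeas) y]
    rw [setIntegral_congr_ae hYy (by filter_upwards [hprod] with ω h _ ; exact h)]
    rw [setIntegral_congr_fun hYy (fun ω hω => by rw [hconst A ω hω, hconst B ω hω])]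
    rw [setIntegral_const, smul_eq_mul, mul_comm]
    rfl
  -- assemble
  have hreal : (μ (A ∩ B ∩ Y ⁻¹' {y})).toReal * (μ (Y ⁻¹' {y})).toReal
      = (μ (A ∩ Y ⁻¹' {y})).toReal * (μ (B ∩ Y ⁻¹' {y})).toReal := by
    rw [← EA, ← EB, ← EAB]; ring
  have h1 : μ (A ∩ B ∩ Y ⁻¹' {y}) * μ (Y ⁻¹' {y}) ≠ ⊤ :=
    ENNReal.mul_ne_top (measure_ne_top _ _) (measure_ne_top _ _)
  have h2 : μ (A ∩ Y ⁻¹' {y}) * μ (B ∩ Y ⁻¹' {y}) ≠ ⊤ :=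
    ENNReal.mul_ne_top (measure_ne_top _ _) (measure_ne_top _ _)
  rw [← ENNReal.toReal_eq_toReal_iff' h1 h2]
  rw [ENNReal.toReal_mul, ENNReal.toReal_mul]
  exact hreal

section
variable {Ω : Type*} {F : MeasurableSpace Ω}
  {μ : Measure Ω} [IsProbabilityMeasure μ] {k m : ℕ}
  {X₂' : Ω → EuclideanSpace ℝ (Fin m)} {Y : Ω → Fin k}

lemma setIntegral_factor (hX₂' : Measurable X₂') (hint : Integrable X₂' μ)
    (hY : Measurable Y) {A : Set Ω} (hAmeas : MeasurableSet A) (y : Fin k)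
    (hposy : 0 < μ (Y ⁻¹' {y}))
    (hfact : ∀ u : Set (EuclideanSpace ℝ (Fin m)), MeasurableSet u →
      μ (A ∩ X₂' ⁻¹' u ∩ Y ⁻¹' {y}) * μ (Y ⁻¹' {y})
        = μ (A ∩ Y ⁻¹' {y}) * μ (X₂' ⁻¹' u ∩ Y ⁻¹' {y})) :
    ∫ ω in A ∩ Y ⁻¹' {y}, X₂' ω ∂μ
      = (μ (A ∩ Y ⁻¹' {y})).toReal •
        ((μ (Y ⁻¹' {y})).toReal⁻¹ • ∫ ω in Y ⁻¹' {y}, X₂' ω ∂μ) := by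
  have hYy : MeasurableSet (Y ⁻¹' {y}) := hY (measurableSet_singleton y)
  have hmeq : (μ (Y ⁻¹' {y})) • ((μ.restrict (A ∩ Y ⁻¹' {y})).map X₂')
      = (μ (A ∩ Y ⁻¹' {y})) • ((μ.restrict (Y ⁻¹' {y})).map X₂') := by
    ext u hu
    rw [Measure.smul_apply, Measure.smul_apply,
      Measure.map_apply hX₂' hu, Measure.map_apply hX₂' hu,
      Measure.restrict_apply (hX₂' hu), Measure.restrict_apply (hX₂' hu)]
    have h1 : X₂' ⁻¹' u ∩ (A ∩ Y ⁻¹' {y}) = A ∩ X₂' ⁻¹' u ∩ Y ⁻¹' {y} := by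
      ext x; simp [Set.mem_inter_iff]; tauto
    rw [h1, smul_eq_mul, smul_eq_mul, mul_comm (μ (Y ⁻¹' {y}))]
    exact hfact u hu
  have hI := congrArg (fun ν : Measure (EuclideanSpace ℝ (Fin m)) => ∫ x, x ∂ν) hmeq
  simp only [integral_smul_measure] at hI
  rw [show (∫ x, x ∂(Measure.map X₂' (μ.restrict (A ∩ Y ⁻¹' {y})))) = ∫ ω in A ∩ Y ⁻¹' {y}, X₂' ω ∂μ
      from integral_map hX₂'.aemeasurable aestronglyMeasurable_id,
    show (∫ x, x ∂(Measure.map X₂' (μ.restrict (Y ⁻¹' {y})))) = ∫ ω in Y ⁻¹' {y}, X₂' ω ∂μ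
      from integral_map hX₂'.aemeasurable aestronglyMeasurable_id] at hI
  have hne : (μ (Y ⁻¹' {y})).toReal ≠ 0 :=
    ENNReal.toReal_ne_zero.mpr ⟨hposy.ne', measure_ne_top _ _⟩
  have := congrArg (fun v => (μ (Y ⁻¹' {y})).toReal⁻¹ • v) hI
  simp only [inv_smul_smul₀ hne] at this
  rw [this, smul_comm]
end


/-- Theorem 1 of the paper (after Lee et al. 2021): for two views `X₁, X₂` of a data
point and a label `Y` with `k` classes, under the class conditional independence
assumption `X₁ ⟂ X₂ | Y` and linear independence of the class-conditional means
`μ_y = E[X₂ · 1_{Y = y}] / P(Y = y)`, there is a linear map `w` with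
`wᵀ ψ*(X₁) = E[Y | X₁]` almost surely, where `ψ*(X₁) = E[X₂ | σ(X₁)]` is the minimizer
of the reconstruction loss and `Y` is identified with its one-hot encoding in `ℝ^k`. -/
theorem exists_linear_map_condexp_eq_posterior
    {Ω : Type*} {F : MeasurableSpace Ω} [StandardBorelSpace Ω]
    {μ : Measure Ω} [IsProbabilityMeasure μ]
    {m k : ℕ} {S : Type*} [MeasurableSpace S]
    (X₂ : Ω → EuclideanSpace ℝ (Fin m)) (hX₂mem : MemLp X₂ 2 μ)
    (X₁ : Ω → S) (hX₁ : Measurable X₁)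
    (Y : Ω → Fin k) (hY : Measurable Y)
    (hpos : ∀ y : Fin k, 0 < μ (Y ⁻¹' {y}))
    (hindep : CondIndepFun (MeasurableSpace.comap Y inferInstance)
      (hY.comap_le) X₁ X₂ μ)
    (hli : LinearIndependent ℝ (fun y : Fin k =>
      (((μ (Y ⁻¹' {y})).toReal)⁻¹ • ∫ ω', Set.indicator (Y ⁻¹' {y}) X₂ ω' ∂μ :
        EuclideanSpace ℝ (Fin m)))) :
    ∃ w : EuclideanSpace ℝ (Fin m) →ₗ[ℝ] EuclideanSpace ℝ (Fin k),
      ∀ᵐ ω ∂μ,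
        w ((μ[X₂ | MeasurableSpace.comap X₁ inferInstance]) ω)
          = WithLp.toLp 2 (fun y : Fin k =>
              condExp (MeasurableSpace.comap X₁ inferInstance) μ
                (Set.indicator (Y ⁻¹' {y}) fun _ => (1 : ℝ)) ω) := by

  classical
  have hmX : MeasurableSpace.comap X₁ (inferInstance : MeasurableSpace S) ≤ F := hX₁.comap_le
  -- measurable representative of X₂
  set X₂' : Ω → EuclideanSpace ℝ (Fin m) := hX₂mem.aestronglyMeasurable.mk X₂ with hX₂'def
  have hX₂'sm : StronglyMeasurable X₂' := hX₂mem.aestronglyMeasurable.stronglyMeasurable_mk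
  have heqae : X₂ =ᵐ[μ] X₂' := hX₂mem.aestronglyMeasurable.ae_eq_mk
  have hX₂' : Measurable X₂' := hX₂'sm.measurable
  have hX₂int : Integrable X₂ μ := hX₂mem.integrable one_le_two
  have hX₂'int : Integrable X₂' μ := hX₂int.congr heqae
  -- the class conditional means
  set c : Fin k → EuclideanSpace ℝ (Fin m) := fun y =>
    (((μ (Y ⁻¹' {y})).toReal)⁻¹ • ∫ ω', Set.indicator (Y ⁻¹' {y}) X₂ ω' ∂μ) with hcdef
  have hYy : ∀ y : Fin k, MeasurableSet (Y ⁻¹' {y}) := fun y => hY (measurableSet_singleton y)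
  have hc : ∀ y : Fin k, c y = ((μ (Y ⁻¹' {y})).toReal)⁻¹ • ∫ ω in Y ⁻¹' {y}, X₂' ω ∂μ := by
    intro y
    show (((μ (Y ⁻¹' {y})).toReal)⁻¹ • ∫ ω', Set.indicator (Y ⁻¹' {y}) X₂ ω' ∂μ :
        EuclideanSpace ℝ (Fin m)) = _
    congr 1
    rw [integral_indicator (hYy y)]
    exact integral_congr_ae (ae_restrict_of_ae heqae)
  -- the integral identity on sets of the form X₁ ⁻¹' t ∩ (Y = y)
  have hkey : ∀ t : Set S, MeasurableSet t → ∀ y : Fin k,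
      ∫ ω in X₁ ⁻¹' t ∩ Y ⁻¹' {y}, X₂' ω ∂μ
        = (μ (X₁ ⁻¹' t ∩ Y ⁻¹' {y})).toReal • c y := by
    intro t ht y
    rw [hc y]
    refine setIntegral_factor hX₂' hX₂'int hY (hX₁ ht) y (hpos y) ?_
    intro u hu
    have h := cond_factorization hX₁ hX₂' heqae hY hindep ht hu y (hpos y)
    exact h
  -- decomposition of set integrals of X₂' over atoms of Y
  have hdecomp : ∀ s : Set Ω, MeasurableSet s →
      ∫ ω in s, X₂' ω ∂μ = ∑ y : Fin k, ∫ ω in s ∩ Y ⁻¹' {y}, X₂' ω ∂μ := by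
    intro s hs
    have hpt : ∀ ω, X₂' ω = ∑ y : Fin k, Set.indicator (Y ⁻¹' {y}) X₂' ω := by
      intro ω
      rw [Finset.sum_eq_single_of_mem (Y ω) (Finset.mem_univ _)
        (fun b _ hb => Set.indicator_of_notMem (by simp [hb.symm]) _)]
      rw [Set.indicator_of_mem (by exact rfl)]
    calc ∫ ω in s, X₂' ω ∂μ = ∫ ω in s, ∑ y : Fin k, Set.indicator (Y ⁻¹' {y}) X₂' ω ∂μ :=
          integral_congr_ae (Filter.Eventually.of_forall (fun ω => hpt ω))
      _ = ∑ y : Fin k, ∫ ω in s, Set.indicator (Y ⁻¹' {y}) X₂' ω ∂μ :=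
          integral_finset_sum _ (fun y _ => (hX₂'int.indicator (hYy y)).integrableOn)
      _ = ∑ y : Fin k, ∫ ω in s ∩ Y ⁻¹' {y}, X₂' ω ∂μ := by
          refine Finset.sum_congr rfl (fun y _ => ?_)
          rw [setIntegral_indicator (hYy y)]
  -- the posterior functions
  set π : Fin k → Ω → ℝ := fun y =>
    condExp (MeasurableSpace.comap X₁ inferInstance) μ
      (Set.indicator (Y ⁻¹' {y}) fun _ => (1 : ℝ)) with hπdef
  set g : Ω → EuclideanSpace ℝ (Fin m) := fun ω => ∑ y : Fin k, π y ω • c y with hgdef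
  have hπint : ∀ y, Integrable (π y) μ := fun y => integrable_condExp
  have hgint : Integrable g μ :=
    integrable_finset_sum _ (fun y _ => (hπint y).smul_const (c y))
  -- g is a version of the conditional expectation of X₂ given X₁
  have hg : g =ᵐ[μ] μ[X₂ | MeasurableSpace.comap X₁ inferInstance] := by
    refine ae_eq_condExp_of_forall_setIntegral_eq hmX hX₂int
      (fun s _ _ => hgint.integrableOn) (fun s hs _ => ?_) ?_
    · obtain ⟨t, ht, rfl⟩ := hs
      have hsF : MeasurableSet (X₁ ⁻¹' t) := hX₁ ht
      have hπint_s : ∀ y, ∫ ω in X₁ ⁻¹' t, π y ω ∂μ = (μ (X₁ ⁻¹' t ∩ Y ⁻¹' {y})).toReal := by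
        intro y
        rw [hπdef]
        rw [setIntegral_condExp hmX ((integrable_const (1 : ℝ)).indicator (hYy y)) ⟨t, ht, rfl⟩]
        rw [setIntegral_indicator (hYy y)]
        simp
        rfl
      calc ∫ ω in X₁ ⁻¹' t, g ω ∂μ
          = ∑ y : Fin k, ∫ ω in X₁ ⁻¹' t, π y ω • c y ∂μ :=
            integral_finset_sum _ (fun y _ => ((hπint y).smul_const (c y)).integrableOn)
        _ = ∑ y : Fin k, (∫ ω in X₁ ⁻¹' t, π y ω ∂μ) • c y := by
            refine Finset.sum_congr rfl (fun y _ => integral_smul_const _ _)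
        _ = ∑ y : Fin k, (μ (X₁ ⁻¹' t ∩ Y ⁻¹' {y})).toReal • c y := by
            refine Finset.sum_congr rfl (fun y _ => by rw [hπint_s y])
        _ = ∑ y : Fin k, ∫ ω in X₁ ⁻¹' t ∩ Y ⁻¹' {y}, X₂' ω ∂μ := by
            refine Finset.sum_congr rfl (fun y _ => (hkey t ht y).symm)
        _ = ∫ ω in X₁ ⁻¹' t, X₂' ω ∂μ := (hdecomp _ hsF).symm
        _ = ∫ ω in X₁ ⁻¹' t, X₂ ω ∂μ :=
            (integral_congr_ae (ae_restrict_of_ae heqae)).symm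
    · refine StronglyMeasurable.aestronglyMeasurable ?_
      refine Finset.stronglyMeasurable_fun_sum _ (fun y _ => ?_)
      exact (stronglyMeasurable_condExp).smul_const (c y)
  -- construct the linear map w
  set p := Submodule.span ℝ (Set.range c) with hpdef
  have hmem : ∀ y, c y ∈ p := fun y => Submodule.subset_span (Set.mem_range_self y)
  set w : EuclideanSpace ℝ (Fin m) →ₗ[ℝ] EuclideanSpace ℝ (Fin k) :=
    (Finsupp.linearCombination ℝ (fun y : Fin k => (EuclideanSpace.single y 1 :
        EuclideanSpace ℝ (Fin k)))) ∘ₗ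
      (hli.repr : p →ₗ[ℝ] (Fin k →₀ ℝ)) ∘ₗ
      (p.orthogonalProjectionOnto).toLinearMap with hwdef
  have hw : ∀ y : Fin k, w (c y) = EuclideanSpace.single y 1 := by
    intro y
    have h1 : (p.orthogonalProjectionOnto) (c y) = ⟨c y, hmem y⟩ := by
      ext1
      exact Submodule.starProjection_eq_self_iff.mpr (hmem y)
    have h2 : hli.repr ⟨c y, hmem y⟩ = Finsupp.single y 1 :=
      hli.repr_eq_single y _ rfl
    rw [hwdef]
    simp only [LinearMap.comp_apply, ContinuousLinearMap.coe_coe, h1]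
    rw [show ((hli.repr : p →ₗ[ℝ] (Fin k →₀ ℝ)) ⟨c y, hmem y⟩) = Finsupp.single y 1 from h2]
    simp [Finsupp.linearCombination_single]
  refine ⟨w, ?_⟩
  filter_upwards [hg] with ω hω
  rw [← hω]
  rw [hgdef]
  simp only [map_sum, _root_.map_smul, hw]
  ext y'
  rw [show (∑ y : Fin k, π y ω • (EuclideanSpace.single y 1 : EuclideanSpace ℝ (Fin k))) y'
      = ∑ y : Fin k, π y ω • (EuclideanSpace.single y 1 : EuclideanSpace ℝ (Fin k)) y' from
    by simp only [WithLp.ofLp_sum, Finset.sum_apply]; rfl]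
  simp [EuclideanSpace.single_apply]
  rfl
end
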